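/- For n ≥ 2, the simple graph whose vertex set is the set of all functions Fin n → Fin n, and in which two distinct functions f and g are adjacent if and only if they are exp-adjacent (i.e., f i ≠ g j for all i ≠ j), is not connected. (This is the disconnectedness of K_n^{K_n}, giving conn(Hom(K_2 × K_n, K_n)) = −1.) -/

import Mathlib

/-- `f` and `g` are adjacent in the exponential graph `K_m^{K_n}`:
for all `i ≠ j`, `f i ≠ g j`. -/
def ExpAdj {n m : ℕ} (f g : Fin n → Fin m) : Prop :=
  ∀ ⦃i j : Fin n⦄, i ≠ j → f i ≠ g j

/-- The simple graph on all functions `Fin n → Fin m` associated to the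
exponential graph `K_m^{K_n}`: two distinct functions are adjacent iff they
are exp-adjacent. -/
def expGraph (n m : ℕ) : SimpleGraph (Fin n → Fin m) where
  Adj f g := f ≠ g ∧ ExpAdj f g
  symm := by
    constructor
    rintro f g ⟨hne, hadj⟩
    exact ⟨hne.symm, fun i j hij => (hadj hij.symm).symm⟩
  loopless := ⟨fun f hf => hf.1 rfl⟩

theorem stmt_13 (n : ℕ) (hn : 2 ≤ n) : ¬ (expGraph n n).Connected := by
  intro hconn
  -- the identity is an isolated vertex
  have hiso : ∀ g : Fin n → Fin n, ¬ (expGraph n n).Adj id g := by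
    rintro g ⟨hne, hadj⟩
    apply hne
    funext j
    by_contra hj
    have hgj : g j ≠ j := fun h => hj (by simpa using h.symm)
    exact hadj hgj rfl
  set a : Fin n := ⟨0, by omega⟩
  set b : Fin n := ⟨1, by omega⟩
  have hne : (id : Fin n → Fin n) ≠ fun _ => a := by
    intro h
    have := congrFun h b
    simp [a, b, Fin.ext_iff] at this
  have key : ∀ g : Fin n → Fin n, (expGraph n n).Reachable id g → id = g := by
    rintro g ⟨w⟩
    cases w with
    | nil => rfl
    | cons h p => exact absurd h (hiso _)
  exact hne (key _ (hconn.preconnected id _))
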